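/- Let u, v ∈ ℂ with |u| ≤ 1, |v| ≤ 1, and let û, v̂ be approximations with |û| ≤ 1, |v̂| ≤ 1. Define ε(x̂) := 2^p |x̂ − x| for the corresponding exact value x. Let ŵ := ρ(û v̂), where ρ is round-towards-zero at precision p. Then ε(ŵ) < ε(û) + ε(v̂) + 2, where ŵ is an approximation of w := uv. -/

import Mathlib

open Complex

noncomputable def rho0 (x : ℝ) : ℤ := if 0 ≤ x then ⌊x⌋ else ⌈x⌉

noncomputable def rho (p : ℕ) (z : ℂ) : ℂ :=
  (2 : ℂ) ^ (-(p : ℤ)) * ((rho0 ((2 : ℝ) ^ p * z.re) : ℂ) + (rho0 ((2 : ℝ) ^ p * z.im) : ℂ) * Complex.I)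

lemma rho0_err (x : ℝ) : |(rho0 x : ℝ) - x| < 1 := by
  unfold rho0
  split_ifs with h
  · push_cast
    rw [abs_lt]
    constructor <;> [linarith [Int.sub_one_lt_floor x]; linarith [Int.floor_le x]]
  · push_cast
    rw [abs_lt]
    constructor <;> [linarith [Int.le_ceil x]; linarith [Int.ceil_lt_add_one x]]

lemma rho_err (p : ℕ) (z : ℂ) : (2 : ℝ) ^ p * ‖(rho p z - z)‖ < 2 := by
  set X := (2 : ℝ) ^ p * z.re with hX
  set Y := (2 : ℝ) ^ p * z.im with hY
  have hpow : ((2 : ℂ) ^ p) * (2 : ℂ) ^ (-(p : ℤ)) = 1 := by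
    rw [← zpow_natCast (2 : ℂ) p, ← zpow_add₀ (by norm_num : (2:ℂ) ≠ 0)]
    simp
  have hz : (2 : ℂ) ^ p * (rho p z - z)
      = (((rho0 X : ℝ) - X : ℝ) : ℂ) + (((rho0 Y : ℝ) - Y : ℝ) : ℂ) * Complex.I := by
    rw [mul_sub, rho, ← mul_assoc, hpow, one_mul]
    have hre : ((2 : ℂ) ^ p) * z = ((X : ℝ) : ℂ) + ((Y : ℝ) : ℂ) * Complex.I := by
      rw [hX, hY]
      push_cast
      rw [show (2:ℂ)^p * ↑z.re + (2:ℂ)^p * ↑z.im * I = (2:ℂ)^p * (↑z.re + ↑z.im * I) by ring,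
        Complex.re_add_im z]
    rw [hre]
    push_cast
    ring
  have habs : (2 : ℝ) ^ p * ‖(rho p z - z)‖
      = ‖((2 : ℂ) ^ p * (rho p z - z))‖ := by
    rw [norm_mul, norm_pow, Complex.norm_two]
  rw [habs, hz]
  calc ‖_‖ ≤ |(rho0 X : ℝ) - X| + |(rho0 Y : ℝ) - Y| := by
        apply le_trans (Complex.norm_le_abs_re_add_abs_im _)
        simp
      _ < 2 := by linarith [rho0_err X, rho0_err Y]

/-- Fixed-point multiplication error bound: if ŵ = ρ(ûv̂), then
ε(ŵ) < ε(û) + ε(v̂) + 2 where ε(x̂) := 2^p |x̂ − x|. -/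
theorem fixed_point_mul_error (p : ℕ) (hp : 1 ≤ p) (u v uh vh : ℂ)
    (hu : ‖u‖ ≤ 1) (hv : ‖v‖ ≤ 1)
    (huh : ‖uh‖ ≤ 1) (hvh : ‖vh‖ ≤ 1) :
    (2 : ℝ) ^ p * ‖(rho p (uh * vh) - u * v)‖ <
      (2 : ℝ) ^ p * ‖(uh - u)‖ + (2 : ℝ) ^ p * ‖(vh - v)‖ + 2 := by
  have hpow : (0 : ℝ) < (2 : ℝ) ^ p := by positivity
  have h1 : ‖(uh * vh - u * v)‖ ≤ ‖(uh - u)‖ + ‖(vh - v)‖ := by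
    have : uh * vh - u * v = (uh - u) * vh + u * (vh - v) := by ring
    rw [this]
    calc ‖((uh - u) * vh + u * (vh - v))‖
        ≤ ‖((uh - u) * vh)‖ + ‖(u * (vh - v))‖ := norm_add_le _ _
      _ = ‖(uh - u)‖ * ‖vh‖ + ‖u‖ * ‖(vh - v)‖ := by
          rw [norm_mul, norm_mul]
      _ ≤ ‖(uh - u)‖ * 1 + 1 * ‖(vh - v)‖ := by
          gcongr <;> assumption
      _ = ‖(uh - u)‖ + ‖(vh - v)‖ := by ring
  have h2 : ‖(rho p (uh * vh) - u * v)‖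
      ≤ ‖(rho p (uh * vh) - uh * vh)‖ + ‖(uh * vh - u * v)‖ := by
    calc ‖(rho p (uh * vh) - u * v)‖
        = ‖(rho p (uh * vh) - uh * vh) + (uh * vh - u * v)‖ := by ring_nf
      _ ≤ _ := norm_add_le _ _
  have h3 := rho_err p (uh * vh)
  nlinarith [norm_nonneg (uh - u), norm_nonneg (vh - v)]
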